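/- If F = (B, s, Y) is a finite object in the category iE of extensional Chu spaces with monic morphisms, then the object set B is finite. The converse fails: a finite object of iE must moreover be discrete, i.e., F = (B,s,Y) is a finite object of iE if and only if B is finite and for every function f : B → Σ there exists y ∈ Y with f = s(-,y). -/

import Mathlib

universe u

/-- A Chu space over `S`: objects `A`, attributes `X`, satisfaction `r`. -/
structure ChuSpace (S : Type u) : Type (u+1) where
  A : Type u
  X : Type u
  r : A → X → S

/-- A Chu morphism `(f, g)`. -/
@[ext]
structure ChuHom {S : Type u} (C D : ChuSpace S) : Type u where
  f : C.A → D.A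
  g : D.X → C.X
  comm : ∀ a y, D.r (f a) y = C.r a (g y)

variable {S : Type u}

/-- Composition of Chu morphisms: `ψ.comp φ = ψ ∘ φ`. -/
def ChuHom.comp {C D E : ChuSpace S} (ψ : ChuHom D E) (φ : ChuHom C D) : ChuHom C E where
  f := ψ.f ∘ φ.f
  g := φ.g ∘ ψ.g
  comm := fun a y => by
    simp only [Function.comp_apply]
    rw [ψ.comm, φ.comm]

def ChuHom.idHom (C : ChuSpace S) : ChuHom C C := ⟨id, id, fun _ _ => rfl⟩

/-- `φ` is an isomorphism of Chu spaces. -/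
def ChuIso {C D : ChuSpace S} (φ : ChuHom C D) : Prop :=
  ∃ ψ : ChuHom D C, φ.comp ψ = ChuHom.idHom D ∧ ψ.comp φ = ChuHom.idHom C

/-- No repeated columns. -/
def ChuExtensional (C : ChuSpace S) : Prop :=
  ∀ x y : C.X, (∀ a, C.r a x = C.r a y) → x = y

/-- No repeated rows. -/
def ChuSeparable (C : ChuSpace S) : Prop :=
  ∀ a b : C.A, (∀ x, C.r a x = C.r b x) → a = b

def ChuBiextensional (C : ChuSpace S) : Prop := ChuExtensional C ∧ ChuSeparable C

/-- Discrete: every function `A → S` is realized by a column. -/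
def ChuDiscrete (C : ChuSpace S) : Prop :=
  ∀ f : C.A → S, ∃ x : C.X, ∀ a, C.r a x = f a

/-- `φ` is monic in the full subcategory of Chu spaces satisfying `Obj`. -/
def MonicIn (Obj : ChuSpace S → Prop) {C D : ChuSpace S} (φ : ChuHom C D) : Prop :=
  ∀ (E : ChuSpace S), Obj E → ∀ ψ₁ ψ₂ : ChuHom E C,
    φ.comp ψ₁ = φ.comp ψ₂ → ψ₁ = ψ₂

/-- Monics of the category `C` of Chu spaces: injective forward, surjective backward. -/
def IsMonoC {C D : ChuSpace S} (φ : ChuHom C D) : Prop :=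
  Function.Injective φ.f ∧ Function.Surjective φ.g

/-- Monics of the categories `E` and `B`: injective forward component. -/
def IsMonoE {C D : ChuSpace S} (φ : ChuHom C D) : Prop :=
  Function.Injective φ.f

/-- An ω-sequence of Chu spaces. -/
structure ChuSeq (S : Type u) : Type (u+1) where
  C : ℕ → ChuSpace S
  φ : ∀ i, ChuHom (C i) (C (i+1))

/-- A cocone from the ω-sequence `T` to `C`. -/
structure Cocone (T : ChuSeq S) (C : ChuSpace S) : Type u where
  ψ : ∀ i, ChuHom (T.C i) C
  compat : ∀ i, (ψ (i+1)).comp (T.φ i) = ψ i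

/-- `c` is a colimit of `T` in the subcategory with objects `Obj` and morphisms `Mor`. -/
structure IsColimit (Obj : ChuSpace S → Prop)
    (Mor : ∀ C D : ChuSpace S, ChuHom C D → Prop)
    (T : ChuSeq S) (C : ChuSpace S) (c : Cocone T C) : Prop where
  obj : Obj C
  mor : ∀ i, Mor _ _ (c.ψ i)
  univ : ∀ (C' : ChuSpace S), Obj C' → ∀ (c' : Cocone T C'), (∀ i, Mor _ _ (c'.ψ i)) →
      ∃! μ : ChuHom C C', Mor _ _ μ ∧ ∀ i, μ.comp (c.ψ i) = c'.ψ i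

/-- A finite object in the subcategory `(Obj, Mor)`: every morphism into a colimit of an
ω-sequence factors through some stage. -/
def FiniteObjIn (Obj : ChuSpace S → Prop) (Mor : ∀ C D : ChuSpace S, ChuHom C D → Prop)
    (F : ChuSpace S) : Prop :=
  Obj F ∧ ∀ (T : ChuSeq S), (∀ i, Obj (T.C i)) → (∀ i, Mor _ _ (T.φ i)) →
    ∀ (C : ChuSpace S) (c : Cocone T C), IsColimit Obj Mor T C c →
      ∀ φ : ChuHom F C, Mor _ _ φ →
        ∃ (i : ℕ) (ψ : ChuHom F (T.C i)), Mor _ _ ψ ∧ (c.ψ i).comp ψ = φ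

/-- Strongly finite: a finite object of `iC` with finite object set,
finite and non-empty attribute set. -/
def StronglyFinite (F : ChuSpace S) : Prop :=
  FiniteObjIn (fun _ => True) (fun _ _ φ => IsMonoC φ) F ∧
    Finite F.A ∧ Finite F.X ∧ Nonempty F.X


lemma ChuHom.ext2 {C D : ChuSpace S} {φ ψ : ChuHom C D} (hf : φ.f = ψ.f) (hg : φ.g = ψ.g) :
    φ = ψ := by
  cases φ; cases ψ; cases hf; cases hg; rfl

lemma ChuHom.comp_assoc {C D E G : ChuSpace S} (χ : ChuHom E G) (ψ : ChuHom D E)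
    (φ : ChuHom C D) : (χ.comp ψ).comp φ = χ.comp (ψ.comp φ) :=
  ChuHom.ext2 rfl rfl

lemma colimit_jointly_surj {T : ChuSeq S} (hobj : ∀ i, ChuExtensional (T.C i))
    {C : ChuSpace S} {c : Cocone T C}
    (hcol : IsColimit ChuExtensional (fun _ _ φ => IsMonoE φ) T C c) :
    ∀ a : C.A, ∃ i b, (c.ψ i).f b = a := by
  classical
  set P : C.A → Prop := fun a => ∃ i b, (c.ψ i).f b = a with hP
  set rel : C.X → C.X → Prop := fun x x' => ∀ p : Subtype P, C.r p.1 x = C.r p.1 x' with hrel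
  set C' : ChuSpace S :=
    ⟨Subtype P, Quot rel, fun p => Quot.lift (fun x => C.r p.1 x) (fun _ _ h => h p)⟩ with hC'def
  have hC' : ChuExtensional C' := by
    intro x y
    induction x using Quot.ind with | _ x =>
    induction y using Quot.ind with | _ y =>
    intro h
    exact Quot.sound (fun p => h p)
  set ψ' : ∀ i, ChuHom (T.C i) C' := fun i =>
    { f := fun b => ⟨(c.ψ i).f b, ⟨i, b, rfl⟩⟩
      g := Quot.lift (fun x => (c.ψ i).g x) (fun x x' h => hobj i _ _ (fun b => by
          rw [← (c.ψ i).comm, ← (c.ψ i).comm]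
          exact h ⟨(c.ψ i).f b, i, b, rfl⟩))
      comm := fun b y => by
        induction y using Quot.ind with | _ y =>
        exact (c.ψ i).comm b y } with hψ'
  have hcompat : ∀ i, (ψ' (i+1)).comp (T.φ i) = ψ' i := by
    intro i
    have h := c.compat i
    apply ChuHom.ext2
    · funext b
      apply Subtype.ext
      show (c.ψ (i+1)).f ((T.φ i).f b) = (c.ψ i).f b
      exact congrFun (congrArg ChuHom.f h) b
    · funext x
      induction x using Quot.ind with | _ x =>
      show (T.φ i).g ((c.ψ (i+1)).g x) = (c.ψ i).g x
      exact congrFun (congrArg ChuHom.g h) x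
  set c'' : Cocone T C' := ⟨ψ', hcompat⟩ with hc''
  have hmon : ∀ i, IsMonoE (c''.ψ i) := by
    intro i b b' h
    exact hcol.mor i (congrArg Subtype.val h)
  obtain ⟨μ, ⟨hμm, hμc⟩, _⟩ := hcol.univ C' hC' c'' hmon
  set ι : ChuHom C' C := ⟨Subtype.val, fun x => Quot.mk rel x, fun _ _ => rfl⟩ with hι
  obtain ⟨ν, _, hνuniq⟩ := hcol.univ C hcol.obj c hcol.mor
  have h1 : ChuHom.idHom C = ν := by
    apply hνuniq
    refine ⟨fun a b h => h, fun i => ChuHom.ext2 rfl rfl⟩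
  have h2 : ι.comp μ = ν := by
    apply hνuniq
    constructor
    · exact fun a b h => hμm (Subtype.ext h)
    · intro i
      rw [ChuHom.comp_assoc, hμc i]
      exact ChuHom.ext2 (funext fun b => rfl) (funext fun x => rfl)
  have h3 : ι.comp μ = ChuHom.idHom C := h2.trans h1.symm
  intro a
  have : (ι.comp μ).f a = a := by rw [h3]; rfl
  have := (μ.f a).2
  rwa [show (μ.f a).1 = a from ‹(ι.comp μ).f a = a›] at this

lemma backwardFinite {F : ChuSpace S} (hext : ChuExtensional F) (hfin : Finite F.A)
    (hdisc : ChuDiscrete F) :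
    FiniteObjIn ChuExtensional (fun _ _ φ => IsMonoE φ) F := by
  classical
  refine ⟨hext, ?_⟩
  intro T hobj hmor C c hcol φ hφ
  have hsurj := colimit_jointly_surj hobj hcol
  have himage : ∀ i j, i ≤ j → ∀ b, ∃ b', (c.ψ j).f b' = (c.ψ i).f b := by
    intro i j hij
    induction hij with
    | refl => exact fun b => ⟨b, rfl⟩
    | @step j' h ih =>
      intro b
      obtain ⟨b', hb'⟩ := ih b
      refine ⟨(T.φ j').f b', ?_⟩
      rw [← hb']
      exact congrFun (congrArg ChuHom.f (c.compat j')) b'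
  have huniform : ∃ i, ∀ b : F.A, ∃ z, (c.ψ i).f z = φ.f b := by
    choose st w hw using fun b => hsurj (φ.f b)
    cases isEmpty_or_nonempty F.A with
    | inl h => exact ⟨0, fun b => isEmptyElim b⟩
    | inr h =>
      obtain ⟨b0, hb0⟩ := Finite.exists_max st
      refine ⟨st b0, fun b => ?_⟩
      obtain ⟨z, hz⟩ := himage (st b) (st b0) (hb0 b) (w b)
      exact ⟨z, by rw [hz, hw b]⟩
  obtain ⟨i, hi⟩ := huniform
  choose zf hzf using hi
  choose yg hyg using fun (u : (T.C i).X) => hdisc (fun b => (T.C i).r (zf b) u)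
  refine ⟨i, ⟨zf, yg, fun b u => (hyg u b).symm⟩, ?_, ?_⟩
  · intro b b' h
    apply hφ
    show φ.f b = φ.f b'
    rw [← hzf b, ← hzf b']
    exact congrArg _ h
  · apply ChuHom.ext2
    · funext b
      exact hzf b
    · funext x
      show yg ((c.ψ i).g x) = φ.g x
      apply hext
      intro b
      rw [hyg ((c.ψ i).g x) b, ← (c.ψ i).comm, hzf b, φ.comm]

section ChainA
open Classical

variable {S : Type u}

/-- `b` is allowed at stage `i`: it is not of the form `e j` for `j ≥ i`. -/
def PA (F : ChuSpace S) (e : ℕ → F.A) (i : ℕ) (b : F.A) : Prop := ∀ j, i ≤ j → b ≠ e j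

open Classical in
noncomputable def stA (σ τ : S) (F : ChuSpace S) (e : ℕ → F.A) (i : ℕ) : ChuSpace S :=
  ⟨{b : F.A // PA F e i b} ⊕ F.X, F.X,
   fun z y => Sum.casesOn z (fun b => F.r b.1 y) (fun y' => if y' = y then τ else σ)⟩

open Classical in
noncomputable def CbigA (σ τ : S) (F : ChuSpace S) : ChuSpace S :=
  ⟨F.A ⊕ F.X, F.X, fun a y => Sum.casesOn a (fun b => F.r b y) (fun y' => if y' = y then τ else σ)⟩

noncomputable def TA (σ τ : S) (F : ChuSpace S) (e : ℕ → F.A) : ChuSeq S :=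
  ⟨stA σ τ F e, fun i =>
    ⟨Sum.map (fun z => ⟨z.1, fun j hj => z.2 j (Nat.le_of_succ_le hj)⟩) id, id,
     fun z y => by cases z <;> rfl⟩⟩

noncomputable def ccA (σ τ : S) (F : ChuSpace S) (e : ℕ → F.A) :
    Cocone (TA σ τ F e) (CbigA σ τ F) :=
  ⟨fun _ => ⟨Sum.map Subtype.val id, id, fun z y => by cases z <;> rfl⟩,
   fun _ => ChuHom.ext2 (funext fun z => by cases z <;> rfl) rfl⟩

lemma extA {σ τ : S} (hστ : σ ≠ τ) (F : ChuSpace S) (e : ℕ → F.A) (i : ℕ) :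
    ChuExtensional (stA σ τ F e i) := by
  intro x y h
  have hx := h (Sum.inr x)
  dsimp [stA] at hx
  replace hx : (if x = x then τ else σ) = if x = y then τ else σ := hx
  rw [if_pos rfl] at hx
  by_contra hxy
  rw [if_neg hxy] at hx
  exact hστ hx.symm

lemma extCA {σ τ : S} (hστ : σ ≠ τ) (F : ChuSpace S) : ChuExtensional (CbigA σ τ F) := by
  intro x y h
  have hx := h (Sum.inr x)
  dsimp [CbigA] at hx
  replace hx : (if x = x then τ else σ) = if x = y then τ else σ := hx
  rw [if_pos rfl] at hx
  by_contra hxy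
  rw [if_neg hxy] at hx
  exact hστ hx.symm

/-- `push` along the chain. -/
def pushT (T : ChuSeq S) (i : ℕ) : ∀ k, (T.C i).A → (T.C (i + k)).A
  | 0 => id
  | (k+1) => fun z => (T.φ (i + k)).f (pushT T i k z)

lemma pushT_spec {T : ChuSeq S} {D : ChuSpace S} (d : Cocone T D) (i k : ℕ)
    (z : (T.C i).A) : (d.ψ (i + k)).f (pushT T i k z) = (d.ψ i).f z := by
  induction k with
  | zero => rfl
  | succ k ih =>
    have h := congrFun (congrArg ChuHom.f (d.compat (i + k))) (pushT T i k z)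
    exact h.trans ih

lemma transferT {T : ChuSeq S} {D₁ D₂ : ChuSpace S} (d₁ : Cocone T D₁) (d₂ : Cocone T D₂)
    (hinj : ∀ m, Function.Injective (d₁.ψ m).f) {i j : ℕ}
    {z : (T.C i).A} {w : (T.C j).A} (h : (d₁.ψ i).f z = (d₁.ψ j).f w) :
    (d₂.ψ i).f z = (d₂.ψ j).f w := by
  rcases le_total i j with hij | hij
  · obtain ⟨k, rfl⟩ := Nat.exists_eq_add_of_le hij
    have h1 := pushT_spec d₁ i k z
    have h2 : pushT T i k z = w := hinj (i + k) (h1.trans h)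
    rw [← h2, pushT_spec d₂]
  · obtain ⟨k, rfl⟩ := Nat.exists_eq_add_of_le hij
    have h1 := pushT_spec d₁ j k w
    have h2 : pushT T j k w = z := hinj (j + k) (h1.trans h.symm)
    rw [← h2, pushT_spec d₂]

lemma injA (σ τ : S) (F : ChuSpace S) (e : ℕ → F.A) (i : ℕ) :
    Function.Injective ((ccA σ τ F e).ψ i).f :=
  Subtype.val_injective.sumMap (fun _ _ h => h)

lemma monTA (σ τ : S) (F : ChuSpace S) (e : ℕ → F.A) (i : ℕ) :
    IsMonoE ((TA σ τ F e).φ i) :=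
by
  have h : ((ccA σ τ F e).ψ (i+1)).f ∘ ((TA σ τ F e).φ i).f = ((ccA σ τ F e).ψ i).f :=
    congrArg ChuHom.f ((ccA σ τ F e).compat i)
  have h2 := injA σ τ F e i
  rw [← h] at h2
  exact h2.of_comp

lemma colimA {σ τ : S} (hστ : σ ≠ τ) (F : ChuSpace S) (e : ℕ → F.A)
    (hinfe : Function.Injective e) :
    IsColimit ChuExtensional (fun _ _ φ => IsMonoE φ) (TA σ τ F e) (CbigA σ τ F)
      (ccA σ τ F e) := by
  classical
  constructor
  · exact extCA hστ F
  · exact injA σ τ F e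
  · intro C₂ hext2 c' hc'
    have hsurj : ∀ a : (CbigA σ τ F).A, ∃ i z, ((ccA σ τ F e).ψ i).f z = a := by
      intro a
      cases a with
      | inl b =>
        by_cases hb : ∃ j, b = e j
        · obtain ⟨j, rfl⟩ := hb
          refine ⟨j + 1, Sum.inl ⟨e j, fun j' hj' hcon => ?_⟩, rfl⟩
          exact absurd (hinfe hcon) (by omega)
        · exact ⟨0, Sum.inl ⟨b, fun j _ hcon => hb ⟨j, hcon⟩⟩, rfl⟩
      | inr y => exact ⟨0, Sum.inr y, rfl⟩
    choose sti stz hstz using hsurj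
    have hgconst : ∀ i, (c'.ψ i).g = (c'.ψ 0).g := by
      intro i
      induction i with
      | zero => rfl
      | succ n ih =>
        have h : (c'.ψ (n+1)).g = (c'.ψ n).g := congrArg ChuHom.g (c'.compat n)
        rw [h, ih]
    set μf : (CbigA σ τ F).A → C₂.A := fun a => (c'.ψ (sti a)).f (stz a) with hμf
    have hkey : ∀ i z, μf (((ccA σ τ F e).ψ i).f z) = (c'.ψ i).f z := by
      intro i z
      exact transferT (ccA σ τ F e) c' (injA σ τ F e)
        (hstz (((ccA σ τ F e).ψ i).f z))
    refine ⟨⟨μf, (c'.ψ 0).g, ?_⟩, ⟨?_, ?_⟩, ?_⟩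
    · intro a x
      have h1 := (c'.ψ (sti a)).comm (stz a) x
      rw [hgconst (sti a)] at h1
      have h2 : (CbigA σ τ F).r (((ccA σ τ F e).ψ (sti a)).f (stz a)) ((c'.ψ 0).g x)
          = (stA σ τ F e (sti a)).r (stz a) ((c'.ψ 0).g x) := by
        cases stz a <;> rfl
      calc C₂.r (μf a) x = (stA σ τ F e (sti a)).r (stz a) ((c'.ψ 0).g x) := h1
        _ = (CbigA σ τ F).r (((ccA σ τ F e).ψ (sti a)).f (stz a)) ((c'.ψ 0).g x) := h2.symm
        _ = (CbigA σ τ F).r a ((c'.ψ 0).g x) := by rw [hstz a]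
    · intro a a' h
      have h2 := transferT c' (ccA σ τ F e) (fun m => hc' m)
        (h : (c'.ψ (sti a)).f (stz a) = (c'.ψ (sti a')).f (stz a'))
      rw [hstz a, hstz a'] at h2
      exact h2
    · intro i
      apply ChuHom.ext2
      · funext z
        exact hkey i z
      · funext x
        exact (congrFun (hgconst i) x).symm
    · intro ν ⟨hνm, hνc⟩
      apply ChuHom.ext2
      · funext a
        have h1 : ν.f (((ccA σ τ F e).ψ (sti a)).f (stz a)) = (c'.ψ (sti a)).f (stz a) :=
          congrFun (congrArg ChuHom.f (hνc (sti a))) (stz a)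
        rw [hstz a] at h1
        exact h1
      · funext x
        exact congrFun (congrArg ChuHom.g (hνc 0)) x

lemma forwardA {σ τ : S} (hστ : σ ≠ τ) {F : ChuSpace S}
    (hF : FiniteObjIn ChuExtensional (fun _ _ φ => IsMonoE φ) F) : Finite F.A := by
  classical
  by_contra hinf
  have : Infinite F.A := not_finite_iff_infinite.mp hinf
  set e : ℕ → F.A := fun n => (Infinite.natEmbedding F.A) n with he
  have hinfe : Function.Injective e := fun a b h => (Infinite.natEmbedding F.A).injective h
  obtain ⟨i, ψ, hm, hcomp⟩ := hF.2 (TA σ τ F e) (fun i => extA hστ F e i)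
    (fun i => monTA σ τ F e i)
    (CbigA σ τ F) (ccA σ τ F e) (colimA hστ F e hinfe)
    ⟨Sum.inl, id, fun _ _ => rfl⟩ Sum.inl_injective
  have hf : (((ccA σ τ F e).ψ i).comp ψ).f (e i) = Sum.inl (e i) :=
    congrFun (congrArg ChuHom.f hcomp) (e i)
  cases h : ψ.f (e i) with
  | inl z =>
    have h3 : (Sum.inl z.1 : F.A ⊕ F.X) = Sum.inl (e i) := by
      rw [← hf]
      show Sum.inl z.1 = Sum.map Subtype.val id (ψ.f (e i))
      rw [h]
      rfl
    exact z.2 i le_rfl (Sum.inl_injective h3)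
  | inr y =>
    have h3 : (Sum.inr y : F.A ⊕ F.X) = Sum.inl (e i) := by
      rw [← hf]
      show Sum.inr y = Sum.map Subtype.val id (ψ.f (e i))
      rw [h]
      rfl
    exact absurd h3 (by simp)

end ChainA

section ChainB
open Classical

variable {S : Type u}

def PtsB (F : ChuSpace S) : Type u := F.A ⊕ ULift.{u} ℕ

def AttrB (F : ChuSpace S) (i : ℕ) : Type u :=
  F.X ⊕ {p : (F.A → S) × ULift.{u} ℕ // i ≤ p.2.down}

open Classical in
noncomputable def rB (σ τ : S) (F : ChuSpace S) :
    PtsB F → (F.X ⊕ ((F.A → S) × ULift.{u} ℕ)) → S :=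
  fun a x =>
    Sum.casesOn a
      (fun b => Sum.casesOn x (fun y => F.r b y) (fun p => p.1 b))
      (fun n => Sum.casesOn x (fun _ => σ) (fun p => if n.down = p.2.down then τ else σ))

noncomputable def stB (σ τ : S) (F : ChuSpace S) (i : ℕ) : ChuSpace S :=
  ⟨PtsB F, AttrB F i, fun a x => rB σ τ F a (Sum.map id Subtype.val x)⟩

noncomputable def TB (σ τ : S) (F : ChuSpace S) : ChuSeq S :=
  ⟨stB σ τ F, fun i =>
    ⟨id, Sum.map id (fun p => ⟨p.1, Nat.le_of_succ_le p.2⟩),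
     fun a x => by cases x <;> rfl⟩⟩

noncomputable def CB (σ τ : S) (F : ChuSpace S) : ChuSpace S :=
  ⟨PtsB F, F.X, fun a y => rB σ τ F a (Sum.inl y)⟩

noncomputable def ccB (σ τ : S) (F : ChuSpace S) : Cocone (TB σ τ F) (CB σ τ F) :=
  ⟨fun _ => ⟨id, Sum.inl, fun a y => rfl⟩,
   fun _ => ChuHom.ext2 rfl (funext fun y => rfl)⟩

lemma extB {σ τ : S} (hστ : σ ≠ τ) {F : ChuSpace S} (hext : ChuExtensional F) (i : ℕ) :
    ChuExtensional (stB σ τ F i) := by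
  intro x y h
  cases x with
  | inl y1 =>
    cases y with
    | inl y2 => exact congrArg Sum.inl (hext y1 y2 (fun b => h (Sum.inl b)))
    | inr q =>
      have hq := h (Sum.inr q.1.2)
      dsimp [stB, rB] at hq
      rw [if_pos rfl] at hq
      exact absurd hq hστ
  | inr p =>
    cases y with
    | inl y2 =>
      have hp := h (Sum.inr p.1.2)
      dsimp [stB, rB] at hp
      rw [if_pos rfl] at hp
      exact absurd hp.symm hστ
    | inr q =>
      have hpq := h (Sum.inr p.1.2)
      dsimp [stB, rB] at hpq
      rw [if_pos rfl] at hpq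
      by_cases hkk : p.1.2.down = q.1.2.down
      · have hfun : p.1.1 = q.1.1 := funext fun b => h (Sum.inl b)
        have : p.1 = q.1 := Prod.ext hfun (ULift.ext _ _ hkk)
        exact congrArg Sum.inr (Subtype.ext this)
      · rw [if_neg hkk] at hpq
        exact absurd hpq.symm hστ

lemma extCB {σ τ : S} {F : ChuSpace S} (hext : ChuExtensional F) :
    ChuExtensional (CB σ τ F) := by
  intro x y h
  exact hext x y (fun b => h (Sum.inl b))

lemma colimB {σ τ : S} (hστ : σ ≠ τ) {F : ChuSpace S} (hext : ChuExtensional F) :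
    IsColimit ChuExtensional (fun _ _ φ => IsMonoE φ) (TB σ τ F) (CB σ τ F) (ccB σ τ F) := by
  classical
  constructor
  · exact extCB hext
  · exact fun i a b h => h
  · intro C₂ hext2 c' hc'
    have hfconst : ∀ i, (c'.ψ i).f = (c'.ψ 0).f := by
      intro i
      induction i with
      | zero => rfl
      | succ n ih =>
        have h : (c'.ψ (n+1)).f = (c'.ψ n).f := congrArg ChuHom.f (c'.compat n)
        rw [h, ih]
    have hgstep : ∀ i x, ((TB σ τ F).φ i).g ((c'.ψ (i+1)).g x) = (c'.ψ i).g x :=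
      fun i x => congrFun (congrArg ChuHom.g (c'.compat i)) x
    have gprop : ∀ x : C₂.X, ∃ y : F.X, ∀ i, (c'.ψ i).g x = Sum.inl y := by
      intro x
      cases h0 : (c'.ψ 0).g x with
      | inl y0 =>
        refine ⟨y0, ?_⟩
        intro i
        induction i with
        | zero => exact h0
        | succ n ih =>
          have hs := hgstep n x
          rw [ih] at hs
          cases hw : (c'.ψ (n+1)).g x with
          | inl y =>
            rw [hw] at hs
            have : (Sum.inl y : AttrB F n) = Sum.inl y0 := hs
            rw [Sum.inl_injective this]
          | inr q =>
            rw [hw] at hs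
            exact absurd hs (by simp [TB])
      | inr p0 =>
        exfalso
        have hall : ∀ i, ∃ hi : i ≤ p0.1.2.down, (c'.ψ i).g x = Sum.inr ⟨p0.1, hi⟩ := by
          intro i
          induction i with
          | zero => exact ⟨p0.2, by rw [h0]⟩
          | succ n ih =>
            obtain ⟨hn, hval⟩ := ih
            have hs := hgstep n x
            rw [hval] at hs
            cases hw : (c'.ψ (n+1)).g x with
            | inl y =>
              rw [hw] at hs
              exact absurd hs (by simp [TB])
            | inr q =>
              rw [hw] at hs
              have hq : (Sum.inr ⟨q.1, Nat.le_of_succ_le q.2⟩ : AttrB F n)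
                  = Sum.inr ⟨p0.1, hn⟩ := hs
              have hq1 : q.1 = p0.1 := congrArg Subtype.val (Sum.inr_injective hq)
              exact ⟨hq1 ▸ q.2, congrArg Sum.inr (Subtype.ext hq1)⟩
        obtain ⟨hi, _⟩ := hall (p0.1.2.down + 1)
        omega
    choose μg hμg using gprop
    refine ⟨⟨(c'.ψ 0).f, μg, ?_⟩, ⟨hc' 0, ?_⟩, ?_⟩
    · intro a x
      have h1 := (c'.ψ 0).comm a x
      rw [hμg x 0] at h1
      exact h1
    · intro i
      apply ChuHom.ext2
      · funext a
        exact (congrFun (hfconst i) a).symm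
      · funext x
        exact (hμg x i).symm
    · intro ν ⟨hνm, hνc⟩
      apply ChuHom.ext2
      · funext a
        exact congrFun (congrArg ChuHom.f (hνc 0)) a
      · funext x
        have h1 : (Sum.inl (ν.g x) : AttrB F 0) = (c'.ψ 0).g x :=
          congrFun (congrArg ChuHom.g (hνc 0)) x
        rw [hμg x 0] at h1
        exact Sum.inl_injective h1

lemma forwardB {σ τ : S} (hστ : σ ≠ τ) {F : ChuSpace S}
    (hF : FiniteObjIn ChuExtensional (fun _ _ φ => IsMonoE φ) F) : ChuDiscrete F := by
  classical
  have hext := hF.1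
  obtain ⟨i, ψ, hm, hcomp⟩ := hF.2 (TB σ τ F) (fun i => extB hστ hext i)
    (fun i => fun a b h => h)
    (CB σ τ F) (ccB σ τ F) (colimB hστ hext)
    ⟨Sum.inl, id, fun _ _ => rfl⟩ Sum.inl_injective
  have hψf : ∀ b, ψ.f b = Sum.inl b := by
    intro b
    exact congrFun (congrArg ChuHom.f hcomp) b
  intro h
  set x : AttrB F i := Sum.inr ⟨(h, ULift.up i), le_rfl⟩ with hx
  refine ⟨ψ.g x, fun b => ?_⟩
  rw [← ψ.comm b x, hψf b]
  rfl

end ChainB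

/-- In `iE`: every finite object has finite object set; the converse fails; and an
extensional `F` is a finite object of `iE` iff its object set is finite and `F` is
discrete (every function `B → S` is realized by an attribute). -/
theorem stmt17 {S : Type u} (h2 : ∃ σ τ : S, σ ≠ τ) :
    (∀ F : ChuSpace S,
      FiniteObjIn ChuExtensional (fun _ _ φ => IsMonoE φ) F → Finite F.A) ∧
    (∃ F : ChuSpace S, ChuExtensional F ∧ Finite F.A ∧
      ¬ FiniteObjIn ChuExtensional (fun _ _ φ => IsMonoE φ) F) ∧
    (∀ F : ChuSpace S, ChuExtensional F →
      (FiniteObjIn ChuExtensional (fun _ _ φ => IsMonoE φ) F ↔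
        (Finite F.A ∧ ChuDiscrete F))) := by
  obtain ⟨σ, τ, hστ⟩ := h2
  have hiff : ∀ F : ChuSpace S, ChuExtensional F →
      (FiniteObjIn ChuExtensional (fun _ _ φ => IsMonoE φ) F ↔
        (Finite F.A ∧ ChuDiscrete F)) := by
    intro F hextF
    constructor
    · intro hF
      exact ⟨forwardA hστ hF, forwardB hστ hF⟩
    · rintro ⟨hfin, hdisc⟩
      exact backwardFinite hextF hfin hdisc
  refine ⟨fun F hF => forwardA hστ hF, ?_, hiff⟩
  have hext0 : ChuExtensional (⟨PUnit, PUnit, fun _ _ => σ⟩ : ChuSpace S) :=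
    fun x y _ => Subsingleton.elim x y
  refine ⟨⟨PUnit, PUnit, fun _ _ => σ⟩, hext0, inferInstance, ?_⟩
  intro hF
  obtain ⟨-, hdisc⟩ := (hiff _ hext0).mp hF
  obtain ⟨x, hx⟩ := hdisc (fun _ => τ)
  exact hστ (hx PUnit.unit)
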